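/- For every cop-win graph G, the cops-and-robbers game with payoff equal to the capture time T(s_C, s_R) has a value: sup over robber strategies of inf over cop strategies of T equals inf over cop strategies of sup over robber strategies of T, and this value is finite. -/

import Mathlib

variable {V : Type*}

/-- `v` is in the closed neighborhood of `u` (reflexive graph moves). -/
def cnbr (G : SimpleGraph V) (u v : V) : Prop := u = v ∨ G.Adj u v

/-- The list of the first `n` moves of the play determined by the strategy pair
`(sC, sR)`: the move at an even index is the cop's, at an odd index the robber's
(so the moves are `x₀ y₀ x₁ y₁ ⋯`). -/
def crHist (sC sR : List V → V) : ℕ → List V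
  | 0 => []
  | n + 1 => crHist sC sR n ++ [(if Even n then sC else sR) (crHist sC sR n)]

/-- The `n`-th move of the play determined by `(sC, sR)`. -/
def crMove (sC sR : List V → V) (n : ℕ) : V :=
  (if Even n then sC else sR) (crHist sC sR n)

/-- A legal cop strategy: at any history where it is the cop's turn (even length),
the chosen vertex lies in the closed neighborhood of the cop's previous position
(the initial placement, on the empty history, is unconstrained). -/
def LegalCop (G : SimpleGraph V) (sC : List V → V) : Prop :=
  ∀ h : List V, Even h.length → ∀ x : V, h[h.length - 2]? = some x → cnbr G x (sC h)

/-- A legal robber strategy: at any history where it is the robber's turn (odd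
length at least 3), the chosen vertex lies in the closed neighborhood of the
robber's previous position (the initial placement is unconstrained). -/
def LegalRob (G : SimpleGraph V) (sR : List V → V) : Prop :=
  ∀ h : List V, Odd h.length → 3 ≤ h.length → ∀ y : V, h[h.length - 2]? = some y →
    cnbr G y (sR h)

/-- The capture time `T(sC, sR) ∈ ℕ∞` of the play determined by `(sC, sR)`: the first
round at which the cop's and robber's positions coincide (`⊤` if they never do). -/
noncomputable def capTime (sC sR : List V → V) : ℕ∞ :=
  sInf {t : ℕ∞ | ∃ n : ℕ, crMove sC sR (n + 1) = crMove sC sR n ∧ t = (((n + 1) / 2 : ℕ) : ℕ∞)}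

/-- `G` is cop-win: the cop has a legal strategy capturing every legal robber in
finitely many rounds. -/
def CopWin (G : SimpleGraph V) : Prop :=
  ∃ sC : List V → V, LegalCop G sC ∧ ∀ sR : List V → V, LegalRob G sR → capTime sC sR ≠ ⊤

/-- A memoryless cop strategy: on histories where it is the cop's turn, the move
depends only on the current cop and robber positions. -/
def MemCop (sC : List V → V) : Prop :=
  ∃ f : V → V → V, ∀ h : List V, Even h.length → ∀ x y : V,
    h[h.length - 2]? = some x → h[h.length - 1]? = some y → sC h = f x y

/-- A memoryless robber strategy: on histories where it is the robber's turn, the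
move depends only on the current robber and cop positions. -/
def MemRob (sR : List V → V) : Prop :=
  ∃ f : V → V → V, ∀ h : List V, Odd h.length → ∀ y x : V,
    h[h.length - 2]? = some y → h[h.length - 1]? = some x → sR h = f y x

lemma cnbr_refl (G : SimpleGraph V) (x : V) : cnbr G x x := Or.inl rfl

section Aux
variable (G : SimpleGraph V)

def cap : ℕ → V → V → Prop
  | 0, x, y => x = y
  | k+1, x, y => x = y ∨ ∃ x', cnbr G x x' ∧
      (x' = y ∨ ∀ y', cnbr G y y' → y' ≠ x' → cap k x' y')

lemma cap_self : ∀ (k : ℕ) (x : V), cap G k x x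
  | 0, _ => rfl
  | _+1, _ => Or.inl rfl

lemma cap_succ : ∀ (k : ℕ) {x y : V}, cap G k x y → cap G (k+1) x y
  | 0, _, _, h => Or.inl h
  | k+1, x, y, h => by
    rcases h with h | ⟨x', h1, h2⟩
    · exact Or.inl h
    · exact Or.inr ⟨x', h1, h2.imp id fun hall y' hy' hne => cap_succ k (hall y' hy' hne)⟩

lemma cap_mono {j k : ℕ} (hjk : j ≤ k) {x y : V} (h : cap G j x y) : cap G k x y := by
  induction hjk with
  | refl => exact h
  | step _ ih => exact cap_succ G _ ih

lemma not_cap_succ {j : ℕ} {x y : V} (h : ¬ cap G (j+1) x y) :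
    x ≠ y ∧ ∀ x', cnbr G x x' → x' ≠ y ∧ ∃ y', cnbr G y y' ∧ y' ≠ x' ∧ ¬ cap G j x' y' := by
  rw [cap] at h
  push_neg at h
  obtain ⟨hxy, h⟩ := h
  refine ⟨hxy, fun x' hx' => ?_⟩
  have h2 := h x' hx'
  exact h2

lemma not_cap_ne {j : ℕ} {x y : V} (h : ¬ cap G j x y) : x ≠ y :=
  fun e => h (e ▸ cap_self G j x)

end Aux

section Hist
variable (sC sR : List V → V)

lemma crHist_eq : ∀ n, crHist sC sR n = (List.range n).map (crMove sC sR)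
  | 0 => rfl
  | n+1 => by
    rw [crHist, crHist_eq n, List.range_succ, List.map_append]
    simp [crMove, crHist_eq n]

lemma crHist_length (n : ℕ) : (crHist sC sR n).length = n := by
  rw [crHist_eq]; simp

lemma crHist_getElem? (n i : ℕ) :
    (crHist sC sR n)[i]? = if i < n then some (crMove sC sR i) else none := by
  rw [crHist_eq]
  by_cases h : i < n
  · simp [List.getElem?_map, List.getElem?_range, h]
  · rw [List.getElem?_map, List.getElem?_eq_none (by simpa using Nat.not_lt.mp h)]
    simp [h]

lemma crMove_even (n : ℕ) : crMove sC sR (2*n) = sC (crHist sC sR (2*n)) := by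
  simp [crMove, even_two_mul]
end Hist


attribute [local instance] Classical.propDecidable

section Strat
variable (G : SimpleGraph V) [Nonempty V]

/-- candidate capture-bounds -/
noncomputable def gv : ℕ := sInf {m : ℕ | ∃ x : V, ∀ y : V, cap G m x y}

noncomputable def cstep (x y : V) : V :=
  if h : ∃ x', cnbr G x x' ∧ (x' = y ∨ ∀ y', cnbr G y y' → y' ≠ x' →
      cap G (sInf {k | cap G k x y} - 1) x' y') then h.choose else x

noncomputable def copStart : V :=
  if h : ∃ x : V, ∀ y : V, cap G (gv G) x y then h.choose else Classical.arbitrary V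

noncomputable def copS (h : List V) : V :=
  if h.length = 0 then copStart G
  else cstep G ((h[h.length-2]?).getD (Classical.arbitrary V))
    ((h[h.length-1]?).getD (Classical.arbitrary V))

noncomputable def rstartF (A : V → V → Prop) (x : V) : V :=
  if h : ∃ y, A x y then h.choose else x

noncomputable def rstepF (B : V → V → Prop) (y x' : V) : V :=
  if h : ∃ y', cnbr G y y' ∧ y' ≠ x' ∧ B x' y' then h.choose else y

noncomputable def robS (A : V → V → Prop) (B : ℕ → V → V → Prop) (h : List V) : V :=
  if h.length ≤ 1 then rstartF A ((h[0]?).getD (Classical.arbitrary V))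
  else rstepF G (B ((h.length - 1)/2)) ((h[h.length-2]?).getD (Classical.arbitrary V))
    ((h[h.length-1]?).getD (Classical.arbitrary V))

omit [Nonempty V] in
lemma cnbr_cstep (x y : V) : cnbr G x (cstep G x y) := by
  rw [cstep]
  split
  · next h => exact h.choose_spec.1
  · exact cnbr_refl G x

omit [Nonempty V] in
lemma cnbr_rstepF (B : V → V → Prop) (y x' : V) : cnbr G y (rstepF G B y x') := by
  rw [rstepF]
  split
  · next h => exact h.choose_spec.1
  · exact cnbr_refl G y

lemma legal_copS : LegalCop G (copS G) := by
  intro h he x hx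
  have hlen : h.length - 2 < h.length := (List.getElem?_eq_some_iff.mp hx).1
  have h0 : h.length ≠ 0 := by omega
  rw [copS, if_neg h0, hx]
  exact cnbr_cstep G x _

lemma legal_robS (A : V → V → Prop) (B : ℕ → V → V → Prop) : LegalRob G (robS G A B) := by
  intro h _ h3 y hy
  have h1 : ¬ h.length ≤ 1 := by omega
  rw [robS, if_neg h1, hy]
  exact cnbr_rstepF G _ y _

end Strat

section Play
variable (G : SimpleGraph V) [Nonempty V]

lemma copS_move0 (sR : List V → V) : crMove (copS G) sR 0 = copStart G := by
  simp [crMove, crHist, copS]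

lemma copS_move (sR : List V → V) (n : ℕ) :
    crMove (copS G) sR (2*n+2) =
      cstep G (crMove (copS G) sR (2*n)) (crMove (copS G) sR (2*n+1)) := by
  have he : Even (2*n+2) := ⟨n+1, by ring⟩
  rw [crMove, if_pos he, copS]
  have hlen : (crHist (copS G) sR (2*n+2)).length = 2*n+2 := crHist_length _ _ _
  rw [if_neg (by omega), hlen]
  have e1 : 2*n+2-2 = 2*n := by omega
  have e2 : 2*n+2-1 = 2*n+1 := by omega
  rw [e1, e2, crHist_getElem?, crHist_getElem?, if_pos (by omega), if_pos (by omega)]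
  rfl

lemma robS_move0 (sC : List V → V) (A : V → V → Prop) (B : ℕ → V → V → Prop) :
    crMove sC (robS G A B) 1 = rstartF A (crMove sC (robS G A B) 0) := by
  have ho : ¬ Even 1 := by decide
  rw [crMove, if_neg ho, robS]
  have hlen : (crHist sC (robS G A B) 1).length = 1 := crHist_length _ _ _
  rw [if_pos (by omega), crHist_getElem?, if_pos (by omega)]
  rfl

lemma robS_move (sC : List V → V) (A : V → V → Prop) (B : ℕ → V → V → Prop) (n : ℕ) :
    crMove sC (robS G A B) (2*n+3) =
      rstepF G (B (n+1)) (crMove sC (robS G A B) (2*n+1)) (crMove sC (robS G A B) (2*n+2)) := by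
  have ho : ¬ Even (2*n+3) := by simp [Nat.even_add_one, parity_simps]
  rw [crMove, if_neg ho, robS]
  have hlen : (crHist sC (robS G A B) (2*n+3)).length = 2*n+3 := crHist_length _ _ _
  rw [if_neg (by omega), hlen]
  have e0 : (2*n+3-1)/2 = n+1 := by omega
  have e1 : 2*n+3-2 = 2*n+1 := by omega
  have e2 : 2*n+3-1 = 2*n+2 := by omega
  rw [e0, e1, e2, crHist_getElem?, crHist_getElem?, if_pos (by omega), if_pos (by omega)]
  rfl

lemma cop_legal_move {sC : List V → V} (hC : LegalCop G sC) (sR : List V → V) (n : ℕ) :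
    cnbr G (crMove sC sR (2*n)) (crMove sC sR (2*n+2)) := by
  have he : Even (2*n+2) := ⟨n+1, by ring⟩
  have hlen : (crHist sC sR (2*n+2)).length = 2*n+2 := crHist_length _ _ _
  have hx : (crHist sC sR (2*n+2))[(crHist sC sR (2*n+2)).length - 2]? =
      some (crMove sC sR (2*n)) := by
    rw [hlen]
    have e1 : 2*n+2-2 = 2*n := by omega
    rw [e1, crHist_getElem?, if_pos (by omega)]
  have := hC (crHist sC sR (2*n+2)) (by rw [hlen]; exact he) _ hx
  simpa only [crMove, if_pos he] using this

lemma rob_legal_move (sC : List V → V) {sR : List V → V} (hR : LegalRob G sR) (n : ℕ) :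
    cnbr G (crMove sC sR (2*n+1)) (crMove sC sR (2*n+3)) := by
  have ho : ¬ Even (2*n+3) := by simp [Nat.even_add_one, parity_simps]
  have hlen : (crHist sC sR (2*n+3)).length = 2*n+3 := crHist_length _ _ _
  have hy : (crHist sC sR (2*n+3))[(crHist sC sR (2*n+3)).length - 2]? =
      some (crMove sC sR (2*n+1)) := by
    rw [hlen]
    have e1 : 2*n+3-2 = 2*n+1 := by omega
    rw [e1, crHist_getElem?, if_pos (by omega)]
  have := hR (crHist sC sR (2*n+3)) (by rw [hlen]; exact ⟨n+1, by omega⟩) (by omega) _ hy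
  simpa only [crMove, if_neg ho] using this

end Play

section CapT

lemma capTime_le {sC sR : List V → V} {n k : ℕ} (h : crMove sC sR (n+1) = crMove sC sR n)
    (hk : (n+1)/2 ≤ k) : capTime sC sR ≤ (k : ℕ∞) :=
  le_trans (sInf_le ⟨n, h, rfl⟩) (by exact_mod_cast hk)

lemma le_capTime {sC sR : List V → V} {k : ℕ}
    (h : ∀ n, crMove sC sR (n+1) = crMove sC sR n → k ≤ (n+1)/2) :
    (k : ℕ∞) ≤ capTime sC sR := by
  apply le_sInf
  rintro t ⟨n, hn, rfl⟩
  exact_mod_cast h n hn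

lemma capTime_eq_top {sC sR : List V → V} (h : ∀ n, crMove sC sR (n+1) ≠ crMove sC sR n) :
    capTime sC sR = ⊤ := by
  rw [capTime, sInf_eq_top]
  rintro t ⟨n, hn, rfl⟩
  exact absurd hn (h n)

end CapT

section Main
variable (G : SimpleGraph V) [Nonempty V]

lemma copBound {sR : List V → V} (hR : LegalRob G sR) :
    ∀ k n, cap G k (crMove (copS G) sR (2*n)) (crMove (copS G) sR (2*n+1)) →
    ∃ m, crMove (copS G) sR (m+1) = crMove (copS G) sR m ∧ (m+1)/2 ≤ n + k := by
  intro k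
  induction k with
  | zero =>
    intro n hc
    exact ⟨2*n, hc.symm, by omega⟩
  | succ k ih =>
    intro n hc
    by_cases hcr : crMove (copS G) sR (2*n) = crMove (copS G) sR (2*n+1)
    · exact ⟨2*n, hcr.symm, by omega⟩
    · have hmem : sInf {k' | cap G k' (crMove (copS G) sR (2*n)) (crMove (copS G) sR (2*n+1))}
          ∈ {k' | cap G k' (crMove (copS G) sR (2*n)) (crMove (copS G) sR (2*n+1))} :=
        Nat.sInf_mem ⟨k+1, hc⟩
      have hpos : sInf {k' | cap G k' (crMove (copS G) sR (2*n)) (crMove (copS G) sR (2*n+1))} ≠ 0 := by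
        intro h0
        rw [h0] at hmem
        exact hcr hmem
      have hle : sInf {k' | cap G k' (crMove (copS G) sR (2*n)) (crMove (copS G) sR (2*n+1))} ≤ k+1 :=
        Nat.sInf_le hc
      have hcap' : cap G (sInf {k' | cap G k' (crMove (copS G) sR (2*n)) (crMove (copS G) sR (2*n+1))} - 1 + 1)
          (crMove (copS G) sR (2*n)) (crMove (copS G) sR (2*n+1)) := by
        rw [Nat.sub_add_cancel (Nat.one_le_iff_ne_zero.mpr hpos)]
        exact hmem
      rcases hcap' with h | ⟨x', hx1, hx2⟩
      · exact absurd h hcr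
      · have hex : ∃ x', cnbr G (crMove (copS G) sR (2*n)) x' ∧
            (x' = crMove (copS G) sR (2*n+1) ∨ ∀ y', cnbr G (crMove (copS G) sR (2*n+1)) y' → y' ≠ x' →
              cap G (sInf {k' | cap G k' (crMove (copS G) sR (2*n)) (crMove (copS G) sR (2*n+1))} - 1) x' y') :=
          ⟨x', hx1, hx2⟩
        have hstep : crMove (copS G) sR (2*n+2) = hex.choose := by
          rw [copS_move G sR n, cstep, dif_pos hex]
        rcases hex.choose_spec.2 with heq | hall
        · -- cop captures
          refine ⟨2*n+1, ?_, by omega⟩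
          rw [hstep, heq]
        · have hleg := rob_legal_move G (copS G) hR n
          by_cases h2 : crMove (copS G) sR (2*n+3) = crMove (copS G) sR (2*n+2)
          · exact ⟨2*n+2, h2, by omega⟩
          · have hcapk : cap G k (crMove (copS G) sR (2*n+2)) (crMove (copS G) sR (2*n+3)) := by
              apply cap_mono G (show sInf {k' | cap G k' (crMove (copS G) sR (2*n)) (crMove (copS G) sR (2*n+1))} - 1 ≤ k by omega)
              rw [hstep]
              exact hall _ hleg (by rw [← hstep]; exact h2)
            have hcapk' : cap G k (crMove (copS G) sR (2*(n+1))) (crMove (copS G) sR (2*(n+1)+1)) := by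
              rw [show 2*(n+1)+1 = 2*n+3 from by ring, show 2*(n+1) = 2*n+2 from by ring]
              exact hcapk
            obtain ⟨m, hm, hmle⟩ := ih (n+1) hcapk'
            exact ⟨m, hm, by omega⟩

lemma cop_capTime_le (hS : ∃ x : V, ∀ y : V, cap G (gv G) x y) {sR : List V → V}
    (hR : LegalRob G sR) : capTime (copS G) sR ≤ (gv G : ℕ∞) := by
  have hstart : ∀ y : V, cap G (gv G) (copStart G) y := by
    rw [copStart, dif_pos hS]
    exact hS.choose_spec
  have hcap : cap G (gv G) (crMove (copS G) sR (2*0)) (crMove (copS G) sR (2*0+1)) := by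
    have : crMove (copS G) sR (2*0) = copStart G := copS_move0 G sR
    rw [this]
    exact hstart _
  obtain ⟨m, hm, hmle⟩ := copBound G hR (gv G) 0 hcap
  exact capTime_le hm (by omega)

noncomputable def sRstar : List V → V :=
  robS G (fun x y => ¬ cap G (gv G - 1) x y) (fun n x' y' => ¬ cap G (gv G - 1 - n) x' y')

lemma rob_inv {sC : List V → V} (hC : LegalCop G sC) :
    ∀ n, n < gv G → ¬ cap G (gv G - 1 - n) (crMove sC (sRstar G) (2*n)) (crMove sC (sRstar G) (2*n+1)) := by
  intro n
  induction n with
  | zero =>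
    intro h0
    have hA : ∃ y, ¬ cap G (gv G - 1) (crMove sC (sRstar G) (2*0)) y := by
      have hnm : gv G - 1 ∉ {m : ℕ | ∃ x : V, ∀ y : V, cap G m x y} :=
        Nat.notMem_of_lt_sInf (show gv G - 1 < gv G by omega)
      simp only [Set.mem_setOf_eq, not_exists] at hnm
      have := hnm (crMove sC (sRstar G) (2*0))
      push_neg at this
      exact this
    have hmv : crMove sC (sRstar G) 1 = rstartF (fun x y => ¬ cap G (gv G - 1) x y)
        (crMove sC (sRstar G) 0) := robS_move0 G sC _ _
    rw [rstartF, dif_pos hA] at hmv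
    show ¬ cap G (gv G - 1 - 0) _ _
    rw [show gv G - 1 - 0 = gv G - 1 from rfl, show (2*0+1) = 1 from rfl, hmv]
    exact hA.choose_spec
  | succ n ih =>
    intro hlt
    have hprev := ih (by omega)
    rw [show gv G - 1 - n = (gv G - 1 - (n+1)) + 1 from by omega] at hprev
    obtain ⟨hne, hstep⟩ := not_cap_succ G hprev
    have hcnb := cop_legal_move G hC (sRstar G) n
    obtain ⟨hne2, y', hy1, hy2, hy3⟩ := hstep _ hcnb
    have hex : ∃ y'', cnbr G (crMove sC (sRstar G) (2*n+1)) y'' ∧ y'' ≠ crMove sC (sRstar G) (2*n+2) ∧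
        (fun n x' y0 => ¬ cap G (gv G - 1 - n) x' y0) (n+1) (crMove sC (sRstar G) (2*n+2)) y'' :=
      ⟨y', hy1, hy2, hy3⟩
    have hmv : crMove sC (sRstar G) (2*n+3) =
        rstepF G ((fun n x' y0 => ¬ cap G (gv G - 1 - n) x' y0) (n+1)) (crMove sC (sRstar G) (2*n+1))
          (crMove sC (sRstar G) (2*n+2)) := robS_move G sC _ _ n
    rw [rstepF, dif_pos hex] at hmv
    rw [show 2*(n+1)+1 = 2*n+3 from by ring, show 2*(n+1) = 2*n+2 from by ring, hmv]
    exact hex.choose_spec.2.2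

lemma rob_nocap {sC : List V → V} (hC : LegalCop G sC) :
    ∀ m, crMove sC (sRstar G) (m+1) = crMove sC (sRstar G) m → gv G ≤ (m+1)/2 := by
  intro m hm
  by_contra hcon
  push_neg at hcon
  rcases Nat.even_or_odd m with ⟨n, hn⟩ | ⟨n, hn⟩
  · have hn' : m = 2*n := by omega
    subst hn'
    have hinv := rob_inv G hC n (by omega)
    exact not_cap_ne G hinv (hm.symm)
  · have hn' : m = 2*n+1 := by omega
    subst hn'
    have hinv := rob_inv G hC n (by omega)
    rw [show gv G - 1 - n = (gv G - 2 - n) + 1 from by omega] at hinv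
    obtain ⟨_, hstep⟩ := not_cap_succ G hinv
    have hcnb := cop_legal_move G hC (sRstar G) n
    exact (hstep _ hcnb).1 hm

lemma rob_capTime_ge {sC : List V → V} (hC : LegalCop G sC) :
    (gv G : ℕ∞) ≤ capTime sC (sRstar G) :=
  le_capTime (rob_nocap G hC)

end Main

section Esc
variable (G : SimpleGraph V) [Fintype V]

lemma cap_of_exists {x y : V} (h : ∃ k, cap G k x y) :
    cap G (sInf {k | cap G k x y}) x y := Nat.sInf_mem h

lemma esc_step {x y : V} (h : ∀ k, ¬ cap G k x y) {x' : V} (hx' : cnbr G x x') :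
    x' ≠ y ∧ ∃ y', cnbr G y y' ∧ y' ≠ x' ∧ ∀ k, ¬ cap G k x' y' := by
  classical
  have hne : x' ≠ y := ((not_cap_succ G (h 1)).2 x' hx').1
  refine ⟨hne, ?_⟩
  by_contra hcon
  push_neg at hcon
  have hall : ∀ y', cnbr G y y' → y' ≠ x' → ∃ k, cap G k x' y' := by
    intro y' h1 h2
    obtain ⟨k, hk⟩ := hcon y' h1 h2
    exact ⟨k, hk⟩
  have : cap G (Finset.univ.sup (fun y' : V => sInf {k | cap G k x' y'}) + 1) x y := by
    refine Or.inr ⟨x', hx', Or.inr fun y' h1 h2 => ?_⟩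
    exact cap_mono G (Finset.le_sup (Finset.mem_univ y')) (cap_of_exists G (hall y' h1 h2))
  exact h _ this

lemma exists_good [Nonempty V] (hcw : CopWin G) : ∃ x : V, ∀ y : V, ∃ k, cap G k x y := by
  classical
  by_contra hno
  push_neg at hno
  obtain ⟨sC, hC, hcap⟩ := hcw
  have hinv : ∀ n k, ¬ cap G k
      (crMove sC (robS G (fun x y => ∀ k, ¬ cap G k x y) (fun _ x' y' => ∀ k, ¬ cap G k x' y')) (2*n))
      (crMove sC (robS G (fun x y => ∀ k, ¬ cap G k x y) (fun _ x' y' => ∀ k, ¬ cap G k x' y')) (2*n+1)) := by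
    intro n
    induction n with
    | zero =>
      have hA : ∃ y, ∀ k, ¬ cap G k
          (crMove sC (robS G (fun x y => ∀ k, ¬ cap G k x y) (fun _ x' y' => ∀ k, ¬ cap G k x' y')) (2*0)) y :=
        hno _
      have hmv := robS_move0 G sC (fun x y => ∀ k, ¬ cap G k x y) (fun _ x' y' => ∀ k, ¬ cap G k x' y')
      rw [rstartF, dif_pos hA] at hmv
      intro k
      rw [show (2*0+1) = 1 from rfl, hmv]
      exact hA.choose_spec k
    | succ n ih =>
      have hcnb := cop_legal_move G hC (robS G (fun x y => ∀ k, ¬ cap G k x y) (fun _ x' y' => ∀ k, ¬ cap G k x' y')) n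
      obtain ⟨y', hy1, hy2, hy3⟩ := (esc_step G ih hcnb).2
      have hex : ∃ y'', cnbr G
          (crMove sC (robS G (fun x y => ∀ k, ¬ cap G k x y) (fun _ x' y' => ∀ k, ¬ cap G k x' y')) (2*n+1)) y'' ∧
          y'' ≠ (crMove sC (robS G (fun x y => ∀ k, ¬ cap G k x y) (fun _ x' y' => ∀ k, ¬ cap G k x' y')) (2*n+2)) ∧
          (fun (_ : ℕ) x' y' => ∀ k, ¬ cap G k x' y') (n+1)
            (crMove sC (robS G (fun x y => ∀ k, ¬ cap G k x y) (fun _ x' y' => ∀ k, ¬ cap G k x' y')) (2*n+2)) y'' :=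
        ⟨y', hy1, hy2, hy3⟩
      have hmv := robS_move G sC (fun x y => ∀ k, ¬ cap G k x y) (fun _ x' y' => ∀ k, ¬ cap G k x' y') n
      rw [rstepF, dif_pos hex] at hmv
      intro k
      rw [show 2*(n+1)+1 = 2*n+3 from by ring, show 2*(n+1) = 2*n+2 from by ring, hmv]
      exact hex.choose_spec.2.2 k
  have hnc : ∀ m, crMove sC (robS G (fun x y => ∀ k, ¬ cap G k x y) (fun _ x' y' => ∀ k, ¬ cap G k x' y')) (m+1) ≠
      crMove sC (robS G (fun x y => ∀ k, ¬ cap G k x y) (fun _ x' y' => ∀ k, ¬ cap G k x' y')) m := by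
    intro m hm
    rcases Nat.even_or_odd m with ⟨n, hn⟩ | ⟨n, hn⟩
    · have he : m = 2*n := by omega
      subst he
      exact not_cap_ne G (hinv n 0) hm.symm
    · have he : m = 2*n+1 := by omega
      subst he
      have hcnb := cop_legal_move G hC (robS G (fun x y => ∀ k, ¬ cap G k x y) (fun _ x' y' => ∀ k, ¬ cap G k x' y')) n
      exact (esc_step G (hinv n) hcnb).1 hm
  exact hcap _ (legal_robS G _ _) (capTime_eq_top hnc)

lemma gv_spec [Nonempty V] (hcw : CopWin G) : ∃ x : V, ∀ y : V, cap G (gv G) x y := by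
  classical
  obtain ⟨x, hx⟩ := exists_good G hcw
  have hne : {m : ℕ | ∃ x : V, ∀ y : V, cap G m x y}.Nonempty :=
    ⟨Finset.univ.sup (fun y : V => sInf {k | cap G k x y}), x, fun y =>
      cap_mono G (Finset.le_sup (Finset.mem_univ y)) (cap_of_exists G (hx y))⟩
  exact Nat.sInf_mem hne

end Esc

/-- For every cop-win graph `G`, the CR game with payoff the capture
time has a (finite) value:
`sup_{s_R} inf_{s_C} T(s_C,s_R) = inf_{s_C} sup_{s_R} T(s_C,s_R) < ∞`,
where the quantification ranges over all legal (history-dependent) strategies. -/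
theorem copwin_game_has_value {V : Type*} [Fintype V] (G : SimpleGraph V)
    (hconn : G.Connected) (hcw : CopWin G) :
    ∃ v : ℕ∞, v ≠ ⊤ ∧
      (⨆ sR : {s : List V → V // LegalRob G s}, ⨅ sC : {s : List V → V // LegalCop G s},
        capTime sC.1 sR.1) = v ∧
      (⨅ sC : {s : List V → V // LegalCop G s}, ⨆ sR : {s : List V → V // LegalRob G s},
        capTime sC.1 sR.1) = v := by
  haveI : Nonempty V := hconn.nonempty
  have hS := gv_spec G hcw
  have h1 : (⨅ sC : {s : List V → V // LegalCop G s}, ⨆ sR : {s : List V → V // LegalRob G s},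
      capTime sC.1 sR.1) ≤ (gv G : ℕ∞) :=
    iInf_le_of_le ⟨copS G, legal_copS G⟩ (iSup_le fun sR => cop_capTime_le G hS sR.2)
  have h2 : (gv G : ℕ∞) ≤ ⨆ sR : {s : List V → V // LegalRob G s},
      ⨅ sC : {s : List V → V // LegalCop G s}, capTime sC.1 sR.1 :=
    le_iSup_of_le ⟨sRstar G, legal_robS G _ _⟩ (le_iInf fun sC => rob_capTime_ge G sC.2)
  have h3 : (⨆ sR : {s : List V → V // LegalRob G s}, ⨅ sC : {s : List V → V // LegalCop G s},
      capTime sC.1 sR.1) ≤ ⨅ sC : {s : List V → V // LegalCop G s},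
      ⨆ sR : {s : List V → V // LegalRob G s}, capTime sC.1 sR.1 :=
    iSup_le fun sR => le_iInf fun sC => (iInf_le _ sC).trans
      (le_iSup (fun sR' : {s : List V → V // LegalRob G s} => capTime sC.1 sR'.1) sR)
  exact ⟨(gv G : ℕ∞), by simp, le_antisymm (h3.trans h1) h2, le_antisymm h1 (h2.trans h3)⟩
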